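/- Let π be a group as in the Setup. Then condition (M_{TR⊆F₁}) holds for the group π × π, and the maximal elements of F₁∖TR with respect to inclusion are precisely the subgroups H_{γ,b} for γ ∈ π and b ∈ π∖{e}. -/

import Mathlib

/-- The diagonal homomorphism `π → π × π`. -/
def diagHom (π : Type*) [Group π] : π →* π × π :=
  MonoidHom.prod (MonoidHom.id π) (MonoidHom.id π)

/-- The subgroup `H_{γ,S} = (γ,e)·Δ(Z_π(S))·(γ⁻¹,e)` of `π × π`. -/
def Hsub {π : Type*} [Group π] (γ : π) (S : Set π) : Subgroup (π × π) :=
  Subgroup.map (MulAut.conj ((γ, (1 : π)) : π × π)).toMonoidHom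
    (Subgroup.map (diagHom π) (Subgroup.centralizer S))

/-- The family of subgroups of `G` generated by a set `H` of subgroups: all conjugates of
members of `H` together with all their subgroups. -/
def famGen {G : Type*} [Group G] (H : Set (Subgroup G)) : Set (Subgroup G) :=
  {K | ∃ M ∈ H, ∃ g : G, K ≤ Subgroup.map (MulAut.conj g).toMonoidHom M}

/-- The family `F₁ = F⟨{H_{γ,b} | γ ∈ π, b ∈ π∖{e}}⟩` of subgroups of `π × π`. -/
def famF1 (π : Type*) [Group π] : Set (Subgroup (π × π)) :=
  famGen {K | ∃ γ b : π, b ≠ 1 ∧ K = Hsub γ ({b} : Set π)}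

/-- Condition `(M_{E⊆F})`: every element of `F∖E` is contained in a unique element of `F∖E`
which is maximal in `F∖E` with respect to inclusion. -/
def conditionM {G : Type*} [Group G] (E F : Set (Subgroup G)) : Prop :=
  ∀ H ∈ F \ E, ∃! M : Subgroup G,
    M ∈ F \ E ∧ H ≤ M ∧ ∀ L ∈ F \ E, M ≤ L → M = L

/-- A family `P` of subgroups of `π` is a malnormal collection if for all `i, j` and `g ∈ π`,
either `gP_ig⁻¹ ∩ P_j = {e}`, or `i = j` and `g ∈ P_i`. -/
def IsMalnormalCollection {π : Type*} [Group π] {I : Type*} (P : I → Subgroup π) : Prop :=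
  ∀ i j : I, ∀ g : π,
    Subgroup.map (MulAut.conj g).toMonoidHom (P i) ⊓ P j = ⊥ ∨ (i = j ∧ g ∈ P i)

section Aux

variable {π : Type*} [Group π]

lemma mem_Hsub (γ : π) (S : Set π) (p : π × π) :
    p ∈ Hsub γ S ↔ p.2 ∈ Subgroup.centralizer S ∧ p.1 = γ * p.2 * γ⁻¹ := by
  simp only [Hsub, Subgroup.mem_map, diagHom, MulEquiv.coe_toMonoidHom, MulAut.conj_apply,
    MonoidHom.prod_apply, MonoidHom.id_apply, Prod.ext_iff,
    Prod.fst_mul, Prod.snd_mul, Prod.fst_inv, Prod.snd_inv, one_mul, mul_one, inv_one]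
  constructor
  · rintro ⟨c, ⟨x, hx, hx1, hx2⟩, h1, h2⟩
    refine ⟨?_, ?_⟩
    · rw [← h2, ← hx2]; exact hx
    · rw [← h1, ← h2, ← hx1, ← hx2]
  · rintro ⟨hc, h1⟩
    exact ⟨(p.2, p.2), ⟨p.2, hc, rfl, rfl⟩, h1.symm, rfl⟩

lemma mem_centralizer_singleton (b x : π) :
    x ∈ Subgroup.centralizer ({b} : Set π) ↔ b * x = x * b := by
  simp [Subgroup.mem_centralizer_iff]

lemma conj_Hsub (g : π × π) (γ b : π) :
    Subgroup.map (MulAut.conj g).toMonoidHom (Hsub γ ({b} : Set π)) =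
      Hsub (g.1 * γ * g.2⁻¹) ({g.2 * b * g.2⁻¹} : Set π) := by
  ext p
  rw [Subgroup.mem_map_equiv, mem_Hsub, mem_Hsub, mem_centralizer_singleton,
    mem_centralizer_singleton]
  simp only [MulAut.conj_symm_apply, Prod.fst_mul, Prod.snd_mul, Prod.fst_inv, Prod.snd_inv]
  constructor
  · rintro ⟨h1, h2⟩
    constructor
    · calc g.2 * b * g.2⁻¹ * p.2 = g.2 * (b * (g.2⁻¹ * p.2 * g.2)) * g.2⁻¹ := by group
        _ = g.2 * ((g.2⁻¹ * p.2 * g.2) * b) * g.2⁻¹ := by rw [h1]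
        _ = p.2 * (g.2 * b * g.2⁻¹) := by group
    · have h2' : p.1 = g.1 * (γ * (g.2⁻¹ * p.2 * g.2) * γ⁻¹) * g.1⁻¹ := by
        rw [← h2]; group
      rw [h2']; group
  · rintro ⟨h1, h2⟩
    constructor
    · calc b * (g.2⁻¹ * p.2 * g.2) = g.2⁻¹ * ((g.2 * b * g.2⁻¹) * p.2) * g.2 := by group
        _ = g.2⁻¹ * (p.2 * (g.2 * b * g.2⁻¹)) * g.2 := by rw [h1]
        _ = (g.2⁻¹ * p.2 * g.2) * b := by group
    · rw [h2]; group

lemma Hsub_ne_bot (γ : π) {b : π} (hb : b ≠ 1) : Hsub γ ({b} : Set π) ≠ ⊥ := by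
  intro h
  have : ((γ * b * γ⁻¹, b) : π × π) ∈ Hsub γ ({b} : Set π) := by
    rw [mem_Hsub]; exact ⟨by simp [mem_centralizer_singleton], rfl⟩
  rw [h, Subgroup.mem_bot, Prod.ext_iff] at this
  exact hb this.2

lemma mem_famF1_iff (K : Subgroup (π × π)) :
    K ∈ famF1 π ↔ ∃ γ b : π, b ≠ 1 ∧ K ≤ Hsub γ ({b} : Set π) := by
  constructor
  · rintro ⟨M, ⟨γ, b, hb, rfl⟩, g, hK⟩
    rw [conj_Hsub] at hK
    exact ⟨g.1 * γ * g.2⁻¹, g.2 * b * g.2⁻¹, fun h => hb (conj_eq_one_iff.mp h), hK⟩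
  · rintro ⟨γ, b, hb, hK⟩
    refine ⟨Hsub γ ({b} : Set π), ⟨γ, b, hb, rfl⟩, 1, ?_⟩
    rw [conj_Hsub]
    simpa using hK

lemma Hsub_mem_famF1 (γ : π) {b : π} (hb : b ≠ 1) : Hsub γ ({b} : Set π) ∈ famF1 π :=
  (mem_famF1_iff _).mpr ⟨γ, b, hb, le_rfl⟩

/-- In the Setup, the centralizer of any nontrivial element is abelian. -/
lemma centralizer_comm {I : Type*} {P : I → Subgroup π}
    (hmal : IsMalnormalCollection P) (hab : ∀ i : I, IsMulCommutative (P i))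
    (hcyc : ∀ b : π, (¬ ∃ (i : I) (g : π), g * b * g⁻¹ ∈ P i) →
      IsCyclic (Subgroup.centralizer ({b} : Set π)))
    {b : π} (hb : b ≠ 1) :
    ∀ x ∈ Subgroup.centralizer ({b} : Set π), ∀ y ∈ Subgroup.centralizer ({b} : Set π),
      x * y = y * x := by
  intro x hx y hy
  by_cases hconj : ∃ (i : I) (g : π), g * b * g⁻¹ ∈ P i
  · obtain ⟨i, g, hgb⟩ := hconj
    have key : ∀ z ∈ Subgroup.centralizer ({b} : Set π), g * z * g⁻¹ ∈ P i := by
      intro z hz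
      rcases hmal i i (g * z * g⁻¹) with hbot | ⟨_, hm⟩
      · exfalso
        have hzb : z⁻¹ * b * z = b := by
          rw [mem_centralizer_singleton] at hz
          rw [mul_assoc, hz]; group
        have hmem : (g * b * g⁻¹ : π) ∈
            Subgroup.map (MulAut.conj (g * z * g⁻¹)).toMonoidHom (P i) ⊓ P i := by
          rw [Subgroup.mem_inf]
          refine ⟨?_, hgb⟩
          rw [Subgroup.mem_map_equiv]
          have : (MulAut.conj (g * z * g⁻¹)).symm (g * b * g⁻¹) =
              g * (z⁻¹ * b * z) * g⁻¹ := by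
            simp only [MulAut.conj_symm_apply]; group
          rw [this, hzb]
          exact hgb
        rw [hbot, Subgroup.mem_bot] at hmem
        exact hb (conj_eq_one_iff.mp hmem)
      · exact hm
    haveI := hab i
    have hcomm := Subgroup.mul_comm_of_mem_isMulCommutative (P i) (key x hx) (key y hy)
    have : g * (x * y) * g⁻¹ = g * (y * x) * g⁻¹ := by
      calc g * (x * y) * g⁻¹ = (g * x * g⁻¹) * (g * y * g⁻¹) := by group
        _ = (g * y * g⁻¹) * (g * x * g⁻¹) := hcomm
        _ = g * (y * x) * g⁻¹ := by group
    have := congrArg (fun w => g⁻¹ * w * g) this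
    simpa [mul_assoc] using this
  · obtain ⟨gen, hgen⟩ := (hcyc b hconj).exists_generator
    obtain ⟨m, hm⟩ := hgen ⟨x, hx⟩
    obtain ⟨n, hn⟩ := hgen ⟨y, hy⟩
    have hx' : x = (gen : π) ^ m := by
      rw [← SubgroupClass.coe_zpow]; exact (congrArg Subtype.val hm).symm
    have hy' : y = (gen : π) ^ n := by
      rw [← SubgroupClass.coe_zpow]; exact (congrArg Subtype.val hn).symm
    rw [hx', hy', ← zpow_add, ← zpow_add, add_comm]

/-- Centralizers of commuting nontrivial elements coincide. -/
lemma centralizer_eq_centralizer {I : Type*} {P : I → Subgroup π}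
    (hmal : IsMalnormalCollection P) (hab : ∀ i : I, IsMulCommutative (P i))
    (hcyc : ∀ b : π, (¬ ∃ (i : I) (g : π), g * b * g⁻¹ ∈ P i) →
      IsCyclic (Subgroup.centralizer ({b} : Set π)))
    {b c : π} (hb : b ≠ 1) (hc : c ≠ 1)
    (hbc : c ∈ Subgroup.centralizer ({b} : Set π)) :
    Subgroup.centralizer ({b} : Set π) = Subgroup.centralizer ({c} : Set π) := by
  have hbZc : b ∈ Subgroup.centralizer ({c} : Set π) := by
    rw [mem_centralizer_singleton]
    rw [mem_centralizer_singleton] at hbc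
    exact hbc.symm
  apply le_antisymm
  · intro x hx
    rw [mem_centralizer_singleton]
    exact (centralizer_comm hmal hab hcyc hb x hx c hbc).symm
  · intro x hx
    rw [mem_centralizer_singleton]
    exact (centralizer_comm hmal hab hcyc hc x hx b hbZc).symm

/-- Two `Hsub`s sharing a nontrivial element coincide. -/
lemma Hsub_eq_Hsub {I : Type*} {P : I → Subgroup π}
    (hmal : IsMalnormalCollection P) (hab : ∀ i : I, IsMulCommutative (P i))
    (hcyc : ∀ b : π, (¬ ∃ (i : I) (g : π), g * b * g⁻¹ ∈ P i) →
      IsCyclic (Subgroup.centralizer ({b} : Set π)))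
    {γ γ' b b' : π} (hb : b ≠ 1) (hb' : b' ≠ 1) {p : π × π} (hp : p ≠ 1)
    (h1 : p ∈ Hsub γ ({b} : Set π)) (h2 : p ∈ Hsub γ' ({b'} : Set π)) :
    Hsub γ ({b} : Set π) = Hsub γ' ({b'} : Set π) := by
  rw [mem_Hsub] at h1 h2
  obtain ⟨hc, hp1⟩ := h1
  obtain ⟨hc', hp1'⟩ := h2
  set c := p.2 with hcdef
  have hcne : c ≠ 1 := by
    intro h
    apply hp
    have : p.1 = 1 := by rw [hp1, h]; group
    exact Prod.ext this h
  have hZbc := centralizer_eq_centralizer hmal hab hcyc hb hcne hc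
  have hZb'c := centralizer_eq_centralizer hmal hab hcyc hb' hcne hc'
  have hZbb' : Subgroup.centralizer ({b} : Set π) = Subgroup.centralizer ({b'} : Set π) := by
    rw [hZbc, hZb'c]
  -- d := γ'⁻¹ * γ commutes with c
  have hd : c * (γ'⁻¹ * γ) = (γ'⁻¹ * γ) * c := by
    have : γ * c * γ⁻¹ = γ' * c * γ'⁻¹ := by rw [← hp1, ← hp1']
    have h2 : γ'⁻¹ * (γ * c * γ⁻¹) * γ = γ'⁻¹ * (γ' * c * γ'⁻¹) * γ := by rw [this]
    calc c * (γ'⁻¹ * γ) = γ'⁻¹ * (γ' * c * γ'⁻¹) * γ := by group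
      _ = γ'⁻¹ * (γ * c * γ⁻¹) * γ := h2.symm
      _ = (γ'⁻¹ * γ) * c := by group
  have hdZc : (γ'⁻¹ * γ) ∈ Subgroup.centralizer ({c} : Set π) := by
    rw [mem_centralizer_singleton]; exact hd
  have hconj : ∀ z ∈ Subgroup.centralizer ({c} : Set π), γ * z * γ⁻¹ = γ' * z * γ'⁻¹ := by
    intro z hz
    have hcomm := centralizer_comm hmal hab hcyc hcne z hz (γ'⁻¹ * γ) hdZc
    calc γ * z * γ⁻¹ = γ' * ((γ'⁻¹ * γ) * z * (γ'⁻¹ * γ)⁻¹) * γ'⁻¹ := by group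
      _ = γ' * (z * (γ'⁻¹ * γ) * (γ'⁻¹ * γ)⁻¹) * γ'⁻¹ := by rw [← hcomm]
      _ = γ' * z * γ'⁻¹ := by group
  ext q
  rw [mem_Hsub, mem_Hsub, hZbb']
  constructor
  · rintro ⟨hq2, hq1⟩
    refine ⟨hq2, ?_⟩
    rw [hq1, hconj q.2 (by rw [← hZb'c]; exact hq2)]
  · rintro ⟨hq2, hq1⟩
    refine ⟨hq2, ?_⟩
    rw [hq1, ← hconj q.2 (by rw [← hZb'c]; exact hq2)]

end Aux

/-- For a group `π` as in the Setup, condition `(M_{TR⊆F₁})` holds for `π × π`, and the maximal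
elements of `F₁∖TR` are precisely the subgroups `H_{γ,b}` with `γ ∈ π`, `b ∈ π∖{e}`. -/
theorem conditionM_TR_F1 {π : Type*} [Group π] {I : Type*} (P : I → Subgroup π)
    (htf : ∀ g : π, g ≠ 1 → ¬IsOfFinOrder g)
    (hmal : IsMalnormalCollection P)
    (hab : ∀ i : I, IsMulCommutative (P i))
    (hcyc : ∀ b : π, (¬ ∃ (i : I) (g : π), g * b * g⁻¹ ∈ P i) →
      IsCyclic (Subgroup.centralizer ({b} : Set π))) :
    conditionM ({⊥} : Set (Subgroup (π × π))) (famF1 π) ∧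
      ∀ K : Subgroup (π × π),
        (K ∈ famF1 π \ {⊥} ∧ ∀ L ∈ famF1 π \ ({⊥} : Set (Subgroup (π × π))), K ≤ L → K = L) ↔
          ∃ γ b : π, b ≠ 1 ∧ K = Hsub γ ({b} : Set π) := by
  -- `Hsub γ {b}` is maximal in `F₁ ∖ {⊥}`
  have hmax : ∀ (γ b : π), b ≠ 1 →
      ∀ L ∈ famF1 π \ ({⊥} : Set (Subgroup (π × π))), Hsub γ ({b} : Set π) ≤ L →
        Hsub γ ({b} : Set π) = L := by
    intro γ b hb L hL hle
    obtain ⟨hLF, -⟩ := hL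
    obtain ⟨γ', b', hb', hL'⟩ := (mem_famF1_iff L).mp hLF
    have hq : ((γ * b * γ⁻¹, b) : π × π) ∈ Hsub γ ({b} : Set π) := by
      rw [mem_Hsub]; exact ⟨by simp [mem_centralizer_singleton], rfl⟩
    have hqne : ((γ * b * γ⁻¹, b) : π × π) ≠ 1 := by
      intro h
      exact hb (congrArg Prod.snd h)
    have heq := Hsub_eq_Hsub hmal hab hcyc hb hb' hqne hq (hL' (hle hq))
    exact le_antisymm hle (heq ▸ hL')
  have hmemdiff : ∀ (γ b : π), b ≠ 1 →
      Hsub γ ({b} : Set π) ∈ famF1 π \ ({⊥} : Set (Subgroup (π × π))) := by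
    intro γ b hb
    exact ⟨Hsub_mem_famF1 γ hb, fun h => Hsub_ne_bot γ hb (Set.mem_singleton_iff.mp h)⟩
  constructor
  · -- condition M
    intro H hH
    obtain ⟨hHF, hHne⟩ := hH
    obtain ⟨γ, b, hb, hle⟩ := (mem_famF1_iff H).mp hHF
    obtain ⟨p, hpH, hpne⟩ := H.bot_or_exists_ne_one.resolve_left
      (fun h => hHne (Set.mem_singleton_iff.mpr h))
    refine ⟨Hsub γ ({b} : Set π), ⟨hmemdiff γ b hb, hle, hmax γ b hb⟩, ?_⟩
    rintro M ⟨hM, hHM, hMmax⟩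
    obtain ⟨γ', b', hb', hM'⟩ := (mem_famF1_iff M).mp hM.1
    have heq := Hsub_eq_Hsub hmal hab hcyc hb' hb hpne (hM' (hHM hpH)) (hle hpH)
    have hMle : M ≤ Hsub γ ({b} : Set π) := heq ▸ hM'
    exact hMmax (Hsub γ ({b} : Set π)) (hmemdiff γ b hb) hMle
  · -- characterization of maximal elements
    intro K
    constructor
    · rintro ⟨⟨hKF, hKne⟩, hKmax⟩
      obtain ⟨γ, b, hb, hle⟩ := (mem_famF1_iff K).mp hKF
      exact ⟨γ, b, hb, hKmax (Hsub γ ({b} : Set π)) (hmemdiff γ b hb) hle⟩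
    · rintro ⟨γ, b, hb, rfl⟩
      exact ⟨hmemdiff γ b hb, hmax γ b hb⟩
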